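/- Let (X, d) be a metric space, T > 0, and let ρ : [0, T] → X be a curve admitting an integrable function m : [0, T] → [0, ∞) with d(ρ(s), ρ(t)) ≤ ∫_s^t m(u) du for all 0 ≤ s ≤ t ≤ T. For each ε > 0 let S_ε : X → X be a map, set N_ε := ⌊T/ε⌋, let x_ε(k) denote the k-fold iterate S_ε^[k](ρ(0)), and define the piecewise-constant interpolation ρ_ε(t) := x_ε(⌊t/ε⌋) for t ∈ [0, T]. Assume consistency: for every δ > 0 there is ε₀ > 0 such that for all 0 < ε < ε₀ and all t ∈ [0, T − ε], d(S_ε(ρ(t)), ρ(t + ε)) ≤ δε. Assume contraction in the limit: for every δ > 0 there is ε₀ > 0 such that for all 0 < ε < ε₀ and all k ∈ {0, 1, …, N_ε − 1}, d(S_ε(x_ε(k)), S_ε(ρ(kε))) ≤ d(x_ε(k), ρ(kε)) + δε. Then sup_{t ∈ [0, T]} d(ρ_ε(t), ρ(t)) → 0 as ε → 0⁺. -/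

import Mathlib

open Set MeasureTheory ENNReal

lemma abs_cont_aux (T : ℝ) (m : ℝ → ℝ)
    (hm_nonneg : ∀ u ∈ Icc (0 : ℝ) T, 0 ≤ m u)
    (hm_int : IntegrableOn m (Icc (0 : ℝ) T)) :
    ∀ η > (0 : ℝ), ∃ ε₁ > (0 : ℝ), ∀ a b : ℝ, 0 ≤ a → a ≤ b → b ≤ T → b - a < ε₁ →
      ∫ u in a..b, m u ≤ η := by
  intro η hη
  set μ := volume.restrict (Icc (0 : ℝ) T) with hμ
  have hfin : ∫⁻ x, ENNReal.ofReal (m x) ∂μ ≠ ∞ := by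
    have h1 : ∫⁻ x, ENNReal.ofReal (m x) ∂μ ≤ ∫⁻ x, ‖m x‖₊ ∂μ := by
      refine lintegral_mono fun x => ?_
      rw [← ofReal_coe_nnreal, coe_nnnorm, Real.norm_eq_abs]
      exact ENNReal.ofReal_le_ofReal (le_abs_self _)
    exact (h1.trans_lt hm_int.2).ne
  obtain ⟨δ', hδ'pos, hδ'⟩ := exists_pos_setLIntegral_lt_of_measure_lt (μ := μ)
    hfin (ε := ENNReal.ofReal η) ((ENNReal.ofReal_pos.2 hη).ne')
  obtain ⟨c, hc0, hcδ'⟩ := exists_between hδ'pos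
  have hcfin : c ≠ ∞ := (hcδ'.trans_le le_top).ne
  refine ⟨c.toReal, ENNReal.toReal_pos hc0.ne' hcfin, fun a b ha hab hbT hlt => ?_⟩
  have hsub : Ioc a b ⊆ Icc (0 : ℝ) T := fun x hx => ⟨ha.trans hx.1.le, hx.2.trans hbT⟩
  have hmeas : μ (Ioc a b) < δ' := by
    calc μ (Ioc a b) ≤ volume (Ioc a b) := Measure.restrict_le_self _
      _ = ENNReal.ofReal (b - a) := by rw [Real.volume_Ioc]
      _ < ENNReal.ofReal c.toReal :=
          (ENNReal.ofReal_lt_ofReal_iff (ENNReal.toReal_pos hc0.ne' hcfin)).2 hlt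
      _ = c := ENNReal.ofReal_toReal hcfin
      _ < δ' := hcδ'
  have hint : IntegrableOn m (Ioc a b) := hm_int.mono_set hsub
  have hrestrict : μ.restrict (Ioc a b) = volume.restrict (Ioc a b) := by
    rw [hμ, Measure.restrict_restrict measurableSet_Ioc, inter_eq_left.2 hsub]
  have hnn : 0 ≤ᵐ[volume.restrict (Ioc a b)] m :=
    (ae_restrict_iff' measurableSet_Ioc).2 (ae_of_all _ fun x hx => hm_nonneg x (hsub hx))
  have key : ENNReal.ofReal (∫ x in Ioc a b, m x) < ENNReal.ofReal η := by
    rw [ofReal_integral_eq_lintegral_ofReal hint hnn]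
    calc ∫⁻ x in Ioc a b, ENNReal.ofReal (m x) ∂volume
        = ∫⁻ x in Ioc a b, ENNReal.ofReal (m x) ∂μ := by rw [← hrestrict]
      _ < ENNReal.ofReal η := hδ' _ hmeas
  rw [intervalIntegral.integral_of_le hab]
  rcases le_or_gt (∫ x in Ioc a b, m x) 0 with h | h
  · exact h.trans hη.le
  · exact ((ENNReal.ofReal_lt_ofReal_iff_of_nonneg h.le).1 key).le

/-- **First-order approximation of an absolutely continuous curve by an iterated scheme.**
If `ρ : [0,T] → X` is a curve with metric speed dominated by an integrable function `m`,
and the family of maps `S ε` is consistent along `ρ` and a contraction in the limit along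
its own iterates, then the piecewise-constant interpolation of the iterates
`k ↦ (S ε)^[k] (ρ 0)` converges to `ρ` uniformly on `[0,T]` as `ε → 0⁺`. -/
theorem iterated_scheme_first_order_approximation
    {X : Type*} [MetricSpace X]
    (T : ℝ) (hT : 0 < T)
    (ρ : ℝ → X) (m : ℝ → ℝ)
    (hm_nonneg : ∀ u ∈ Icc (0 : ℝ) T, 0 ≤ m u)
    (hm_int : IntegrableOn m (Icc (0 : ℝ) T))
    (habs : ∀ s t : ℝ, 0 ≤ s → s ≤ t → t ≤ T →
      dist (ρ s) (ρ t) ≤ ∫ u in s..t, m u)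
    (S : ℝ → X → X)
    -- consistency
    (hconsistent : ∀ δ > (0 : ℝ), ∃ ε₀ > (0 : ℝ), ∀ ε : ℝ, 0 < ε → ε < ε₀ →
      ∀ t : ℝ, 0 ≤ t → t ≤ T - ε →
        dist (S ε (ρ t)) (ρ (t + ε)) ≤ δ * ε)
    -- contraction in the limit
    (hcontract : ∀ δ > (0 : ℝ), ∃ ε₀ > (0 : ℝ), ∀ ε : ℝ, 0 < ε → ε < ε₀ →
      ∀ k : ℕ, k < Nat.floor (T / ε) →
        dist (S ε ((S ε)^[k] (ρ 0))) (S ε (ρ (k * ε)))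
          ≤ dist ((S ε)^[k] (ρ 0)) (ρ (k * ε)) + δ * ε) :
    -- uniform convergence of the piecewise-constant interpolation
    ∀ δ > (0 : ℝ), ∃ ε₀ > (0 : ℝ), ∀ ε : ℝ, 0 < ε → ε < ε₀ →
      ∀ t ∈ Icc (0 : ℝ) T,
        dist ((S ε)^[Nat.floor (t / ε)] (ρ 0)) (ρ t) ≤ δ := by
  intro δ hδ
  have hδ₁ : (0 : ℝ) < δ / (6 * T) := by positivity
  obtain ⟨ε₁, hε₁pos, hcons⟩ := hconsistent _ hδ₁
  obtain ⟨ε₂, hε₂pos, hcont⟩ := hcontract _ hδ₁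
  obtain ⟨ε₃, hε₃pos, hinteg⟩ := abs_cont_aux T m hm_nonneg hm_int (δ / 3) (by positivity)
  refine ⟨min ε₁ (min ε₂ ε₃), by positivity, fun ε hε hεlt t ht => ?_⟩
  have hεlt₁ : ε < ε₁ := lt_of_lt_of_le hεlt (min_le_left _ _)
  have hεlt₂ : ε < ε₂ := lt_of_lt_of_le hεlt ((min_le_right _ _).trans (min_le_left _ _))
  have hεlt₃ : ε < ε₃ := lt_of_lt_of_le hεlt ((min_le_right _ _).trans (min_le_right _ _))
  -- inductive bound on the errors at grid points
  have hgrid : ∀ k : ℕ, k ≤ Nat.floor (T / ε) →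
      dist ((S ε)^[k] (ρ 0)) (ρ (k * ε)) ≤ 2 * (δ / (6 * T)) * k * ε := by
    intro k
    induction k with
    | zero => simp
    | succ k ih =>
      intro hk1
      have hklt : k < Nat.floor (T / ε) := hk1
      have hk : k ≤ Nat.floor (T / ε) := hklt.le
      have hk1T : ((k : ℝ) + 1) * ε ≤ T := by
        have h1 : ((k : ℝ) + 1) ≤ T / ε := by
          have := Nat.floor_le (show (0:ℝ) ≤ T / ε by positivity)
          have h2 : ((k + 1 : ℕ) : ℝ) ≤ (Nat.floor (T / ε) : ℝ) := by exact_mod_cast hk1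
          push_cast at h2; linarith
        calc ((k : ℝ) + 1) * ε ≤ (T / ε) * ε := by nlinarith
          _ = T := by field_simp
      have hkε0 : (0:ℝ) ≤ (k : ℝ) * ε := by positivity
      have hstep1 := hcont ε hε hεlt₂ k hklt
      have hstep2 := hcons ε hε hεlt₁ ((k : ℝ) * ε) hkε0 (by linarith [hk1T])
      have hiter : (S ε)^[k + 1] (ρ 0) = S ε ((S ε)^[k] (ρ 0)) :=
        Function.iterate_succ_apply' _ _ _
      have hcast : ((k + 1 : ℕ) : ℝ) * ε = (k : ℝ) * ε + ε := by push_cast; ring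
      calc dist ((S ε)^[k + 1] (ρ 0)) (ρ (((k + 1 : ℕ) : ℝ) * ε))
          ≤ dist ((S ε)^[k + 1] (ρ 0)) (S ε (ρ ((k : ℝ) * ε)))
            + dist (S ε (ρ ((k : ℝ) * ε))) (ρ (((k + 1 : ℕ) : ℝ) * ε)) := dist_triangle _ _ _
        _ ≤ (dist ((S ε)^[k] (ρ 0)) (ρ ((k : ℝ) * ε)) + (δ / (6 * T)) * ε)
            + (δ / (6 * T)) * ε := by
            rw [hiter, hcast]
            exact add_le_add hstep1 hstep2
        _ ≤ (2 * (δ / (6 * T)) * k * ε + (δ / (6 * T)) * ε) + (δ / (6 * T)) * ε := by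
            have := ih hk; linarith
        _ = 2 * (δ / (6 * T)) * ((k : ℕ) + 1 : ℝ) * ε := by ring
        _ = 2 * (δ / (6 * T)) * ((k + 1 : ℕ) : ℝ) * ε := by push_cast; ring
  -- conclude for arbitrary t
  set k := Nat.floor (t / ε) with hkdef
  have ht0 : 0 ≤ t := ht.1
  have htT : t ≤ T := ht.2
  have hkN : k ≤ Nat.floor (T / ε) :=
    Nat.floor_le_floor (by gcongr)
  have hkt : (k : ℝ) * ε ≤ t := by
    have := Nat.floor_le (show (0:ℝ) ≤ t / ε by positivity)
    calc (k : ℝ) * ε ≤ (t / ε) * ε := by nlinarith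
      _ = t := by field_simp
  have htk : t - (k : ℝ) * ε < ε := by
    have := Nat.lt_floor_add_one (t / ε)
    have h2 : t < ((k : ℝ) + 1) * ε := by
      calc t = (t / ε) * ε := by field_simp
        _ < ((k : ℝ) + 1) * ε := by nlinarith
    linarith
  have hbound1 : dist ((S ε)^[k] (ρ 0)) (ρ ((k : ℝ) * ε)) ≤ 2 * (δ / (6 * T)) * k * ε :=
    hgrid k hkN
  have hbound2 : dist (ρ ((k : ℝ) * ε)) (ρ t) ≤ δ / 3 := by
    refine (habs _ t (by positivity) hkt htT).trans ?_
    exact hinteg _ t (by positivity) hkt htT (lt_of_lt_of_le htk hεlt₃.le)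
  have hkεT : (k : ℝ) * ε ≤ T := hkt.trans htT
  have hb1 : 2 * (δ / (6 * T)) * k * ε ≤ δ / 3 := by
    have h3 : 2 * (δ / (6 * T)) * ((k:ℝ) * ε) ≤ 2 * (δ / (6 * T)) * T := by
      have : (0:ℝ) < δ / (6 * T) := hδ₁
      nlinarith
    have h4 : 2 * (δ / (6 * T)) * T = δ / 3 := by field_simp; ring
    linarith [h3, h4.le]
  calc dist ((S ε)^[k] (ρ 0)) (ρ t)
      ≤ dist ((S ε)^[k] (ρ 0)) (ρ ((k : ℝ) * ε)) + dist (ρ ((k : ℝ) * ε)) (ρ t) :=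
        dist_triangle _ _ _
    _ ≤ δ / 3 + δ / 3 := add_le_add (hbound1.trans hb1) hbound2
    _ ≤ δ := by linarith
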